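/- An n×n matrix A is oscillatory if and only if A is totally nonnegative, invertible, and irreducible. -/

import Mathlib

/-- A square real matrix is totally nonnegative if all its minors are nonnegative. -/
def TotallyNonneg {n : ℕ} (A : Matrix (Fin n) (Fin n) ℝ) : Prop :=
  ∀ (k : ℕ) (r c : Fin k → Fin n), StrictMono r → StrictMono c →
    0 ≤ (A.submatrix r c).det


/-- A square real matrix is totally positive if all its minors are positive. -/
def TotallyPos {n : ℕ} (A : Matrix (Fin n) (Fin n) ℝ) : Prop :=
  ∀ (k : ℕ) (r c : Fin k → Fin n), StrictMono r → StrictMono c →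
    0 < (A.submatrix r c).det

/-- A is oscillatory if it is totally nonnegative and some positive power is totally positive. -/
def Oscillatory {n : ℕ} (A : Matrix (Fin n) (Fin n) ℝ) : Prop :=
  TotallyNonneg A ∧ ∃ k : ℕ, 0 < k ∧ TotallyPos (A ^ k)

/-- A matrix is irreducible if no simultaneous permutation of rows and columns puts it
in block upper triangular form (with a zero lower-left block of size (n-k)×k, 0<k<n). -/
def MatIrreducible {n : ℕ} (A : Matrix (Fin n) (Fin n) ℝ) : Prop :=
  ¬ ∃ (σ : Equiv.Perm (Fin n)) (k : ℕ), 0 < k ∧ k < n ∧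
      ∀ i j : Fin n, k ≤ i.val → j.val < k → A (σ i) (σ j) = 0

open Matrix Finset Equiv

namespace TN5aux

variable {k n : ℕ}

noncomputable instance : Fintype {f : Fin k → Fin n // StrictMono f} :=
  Fintype.ofFinite _

private def pImg (p : Fin k → Fin n) : Finset (Fin n) := Finset.image p Finset.univ

private lemma pImg_card {p : Fin k → Fin n} (hp : Function.Injective p) : (pImg p).card = k := by
  rw [pImg, Finset.card_image_of_injective _ hp, Finset.card_univ, Fintype.card_fin]

noncomputable def pSort (p : Fin k → Fin n) (hp : Function.Injective p) : Fin k → Fin n :=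
  (pImg p).orderEmbOfFin (pImg_card hp)

lemma pSort_mono {p : Fin k → Fin n} (hp : Function.Injective p) : StrictMono (pSort p hp) :=
  ((pImg p).orderEmbOfFin (pImg_card hp)).strictMono

noncomputable def pPerm (p : Fin k → Fin n) (hp : Function.Injective p) : Perm (Fin k) :=
  Equiv.ofBijective (fun i => ((pImg p).orderIsoOfFin (pImg_card hp)).symm
      ⟨p i, by simp [pImg]⟩)
    (by
      rw [← Finite.injective_iff_bijective]
      intro a b hab
      apply hp
      have := congrArg (fun x => ((((pImg p).orderIsoOfFin (pImg_card hp))) x).1) hab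
      simpa using this)

lemma pFactor {p : Fin k → Fin n} (hp : Function.Injective p) (i : Fin k) :
    pSort p hp (pPerm p hp i) = p i := by
  simp only [pSort, pPerm, Equiv.ofBijective_apply]
  rw [← Finset.coe_orderIsoOfFin_apply, OrderIso.apply_symm_apply]

theorem cauchy_binet (M : Matrix (Fin k) (Fin n) ℝ) (N : Matrix (Fin n) (Fin k) ℝ) :
    (M * N).det = ∑ f : {f : Fin k → Fin n // StrictMono f},
      (M.submatrix id f.1).det * (N.submatrix f.1 id).det := by
  classical
  have hdetsub : ∀ p : Fin k → Fin n,
      (M.submatrix id p).det = ∑ σ : Perm (Fin k), (Perm.sign σ : ℝ) * ∏ i, M (σ i) (p i) := by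
    intro p; rw [det_apply']; rfl
  have step1 : (M * N).det
      = ∑ p : Fin k → Fin n, (∏ i, N (p i) i) * (M.submatrix id p).det := by
    rw [det_apply']
    have : ∀ σ : Perm (Fin k),
        (Perm.sign σ : ℝ) * ∏ i, (M * N) (σ i) i
        = ∑ p : Fin k → Fin n, (Perm.sign σ : ℝ) * ∏ i, M (σ i) (p i) * N (p i) i := by
      intro σ
      simp only [Matrix.mul_apply]
      rw [Finset.prod_univ_sum, Finset.mul_sum]
      simp [Fintype.piFinset_univ]
    rw [Finset.sum_congr rfl fun σ _ => this σ, Finset.sum_comm]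
    refine Finset.sum_congr rfl fun p _ => ?_
    rw [hdetsub, Finset.mul_sum]
    refine Finset.sum_congr rfl fun σ _ => ?_
    rw [Finset.prod_mul_distrib]
    ring
  rw [step1]
  rw [← Finset.sum_filter_add_sum_filter_not Finset.univ (fun p => Function.Injective p)]
  have h0 : ∑ p ∈ Finset.univ.filter (fun p : Fin k → Fin n => ¬ Function.Injective p),
      (∏ i, N (p i) i) * (M.submatrix id p).det = 0 := by
    refine Finset.sum_eq_zero fun p hp => ?_
    rw [Finset.mem_filter] at hp
    rw [Function.not_injective_iff] at hp
    obtain ⟨i, j, hpij, hij⟩ := hp.2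
    rw [Matrix.det_zero_of_column_eq hij (fun r => by simp [hpij]), mul_zero]
  rw [h0, add_zero]
  have step2 : ∑ p ∈ Finset.univ.filter (fun p : Fin k → Fin n => Function.Injective p),
      (∏ i, N (p i) i) * (M.submatrix id p).det
      = ∑ q : {f : Fin k → Fin n // StrictMono f} × Perm (Fin k),
        (∏ i, N ((q.1.1 ∘ q.2) i) i) * (M.submatrix id (q.1.1 ∘ q.2)).det := by
    refine Finset.sum_bij'
      (i := fun p hp => (⟨pSort p ((Finset.mem_filter.1 hp).2),
          pSort_mono ((Finset.mem_filter.1 hp).2)⟩, pPerm p ((Finset.mem_filter.1 hp).2)))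
      (j := fun q _ => q.1.1 ∘ q.2) (fun _ _ => Finset.mem_univ _)
      (fun q _ => Finset.mem_filter.2 ⟨Finset.mem_univ _,
        q.1.2.injective.comp q.2.injective⟩)
      (fun p hp => funext fun i => pFactor ((Finset.mem_filter.1 hp).2) i)
      (fun q hq => ?_) (fun p hp => by
        have := funext fun i => pFactor ((Finset.mem_filter.1 hp).2) i
        rw [show (pSort p ((Finset.mem_filter.1 hp).2)) ∘ (pPerm p ((Finset.mem_filter.1 hp).2))
          = p from this])
    · -- right inverse
      obtain ⟨⟨f, hf⟩, τ⟩ := q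
      have hinj : Function.Injective (f ∘ τ) := hf.injective.comp τ.injective
      have hfs : ∀ x, f x ∈ pImg (f ∘ τ) := by
        intro x
        simp only [pImg, Finset.mem_image]
        exact ⟨τ.symm x, Finset.mem_univ _, by simp⟩
      have hfeq : f = pSort (f ∘ τ) hinj :=
        Finset.orderEmbOfFin_unique (pImg_card hinj) hfs hf
      refine Prod.ext (Subtype.ext hfeq.symm) (Equiv.ext fun i => ?_)
      · apply hf.injective
        have h1 := pFactor hinj i
        calc f (pPerm (f ∘ τ) hinj i) = pSort (f ∘ τ) hinj (pPerm (f ∘ τ) hinj i) := by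
              rw [← hfeq]
          _ = f (τ i) := h1
  rw [step2, Fintype.sum_prod_type]
  refine Finset.sum_congr rfl fun f _ => ?_
  have hsub : ∀ τ : Perm (Fin k), (M.submatrix id (f.1 ∘ τ)).det
      = (Perm.sign τ : ℝ) * (M.submatrix id f.1).det := by
    intro τ
    rw [show M.submatrix id (f.1 ∘ τ) = (M.submatrix id f.1).submatrix id τ by
      rw [Matrix.submatrix_submatrix]; rfl]
    rw [Matrix.det_permute']
  have hN : (N.submatrix f.1 id).det
      = ∑ τ : Perm (Fin k), (Perm.sign τ : ℝ) * ∏ i, N (f.1 (τ i)) i := by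
    rw [det_apply']; rfl
  rw [hN, Finset.mul_sum]
  refine Finset.sum_congr rfl fun τ _ => ?_
  rw [hsub]
  simp only [Function.comp]
  ring


variable {k n : ℕ}

lemma strictMono_pair {a b : Fin n} (h : a < b) : StrictMono ![a, b] := by
  intro i j hij
  match i, j with
  | ⟨0,_⟩, ⟨0,_⟩ => exact absurd hij (lt_irrefl _)
  | ⟨0,_⟩, ⟨1,_⟩ => exact h
  | ⟨1,_⟩, ⟨0,_⟩ => exact absurd hij (by simp [Fin.lt_def])
  | ⟨1,_⟩, ⟨1,_⟩ => exact absurd hij (lt_irrefl _)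

lemma strictMono_single {a : Fin n} : StrictMono ![a] :=
  Subsingleton.strictMono _

lemma tn1 {A : Matrix (Fin n) (Fin n) ℝ} (hA : TotallyNonneg A) (i j : Fin n) :
    0 ≤ A i j := by
  have := hA 1 ![i] ![j] strictMono_single strictMono_single
  rw [Matrix.det_fin_one] at this
  simpa using this

lemma tn2 {A : Matrix (Fin n) (Fin n) ℝ} (hA : TotallyNonneg A) {p p' q q' : Fin n}
    (hp : p < p') (hq : q < q') :
    0 ≤ A p q * A p' q' - A p q' * A p' q := by
  have := hA 2 ![p, p'] ![q, q'] (strictMono_pair hp) (strictMono_pair hq)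
  rw [Matrix.det_fin_two] at this
  simpa using this

lemma tn_transpose {A : Matrix (Fin n) (Fin n) ℝ} (hA : TotallyNonneg A) :
    TotallyNonneg Aᵀ := by
  intro k r c hr hc
  have : Aᵀ.submatrix r c = (A.submatrix c r)ᵀ := by
    ext i j; simp [Matrix.submatrix_apply]
  rw [this, Matrix.det_transpose]
  exact hA k c r hc hr

lemma tn_submatrix {m : ℕ} {A : Matrix (Fin n) (Fin n) ℝ} (hA : TotallyNonneg A)
    {r c : Fin m → Fin n} (hr : StrictMono r) (hc : StrictMono c) :
    TotallyNonneg (A.submatrix r c) := by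
  intro k r' c' hr' hc'
  rw [Matrix.submatrix_submatrix]
  exact hA k _ _ (hr.comp hr') (hc.comp hc')

lemma tn_mul {A B : Matrix (Fin n) (Fin n) ℝ} (hA : TotallyNonneg A) (hB : TotallyNonneg B) :
    TotallyNonneg (A * B) := by
  intro k r c hr hc
  have hmul : (A * B).submatrix r c = (A.submatrix r id) * (B.submatrix id c) := by
    have := Matrix.submatrix_mul_equiv A B r (Equiv.refl (Fin n)) c
    simpa using this.symm
  rw [hmul, cauchy_binet]
  refine Finset.sum_nonneg fun f _ => ?_
  rw [Matrix.submatrix_submatrix, Matrix.submatrix_submatrix]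
  simp only [Function.comp_id, Function.id_comp]
  exact mul_nonneg (hA k r f.1 hr f.2) (hB k f.1 c f.2 hc)

lemma tn_pow {A : Matrix (Fin n) (Fin n) ℝ} (hA : TotallyNonneg A) {m : ℕ} (hm : 0 < m) :
    TotallyNonneg (A ^ m) := by
  induction m with
  | zero => omega
  | succ m ih =>
    rcases Nat.eq_zero_or_pos m with h | h
    · subst h; simpa [pow_one] using hA
    · rw [pow_succ]
      exact tn_mul (ih h) hA

lemma cb_ge {A B : Matrix (Fin n) (Fin n) ℝ} (hA : TotallyNonneg A) (hB : TotallyNonneg B)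
    {r s c : Fin k → Fin n} (hr : StrictMono r) (hs : StrictMono s) (hc : StrictMono c) :
    (A.submatrix r s).det * (B.submatrix s c).det ≤ ((A * B).submatrix r c).det := by
  have hmul : (A * B).submatrix r c = (A.submatrix r id) * (B.submatrix id c) := by
    have := Matrix.submatrix_mul_equiv A B r (Equiv.refl (Fin n)) c
    simpa using this.symm
  rw [hmul, cauchy_binet]
  have hterm : ∀ f : {f : Fin k → Fin n // StrictMono f},
      ((A.submatrix r id).submatrix id f.1).det * ((B.submatrix id c).submatrix f.1 id).det
      = (A.submatrix r f.1).det * (B.submatrix f.1 c).det := by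
    intro f
    rw [Matrix.submatrix_submatrix, Matrix.submatrix_submatrix]
    simp only [Function.comp_id, Function.id_comp]
  refine le_trans (le_of_eq ?_) (Finset.single_le_sum (fun f _ => ?_)
    (Finset.mem_univ (⟨s, hs⟩ : {f : Fin k → Fin n // StrictMono f})))
  · exact (hterm ⟨s, hs⟩).symm
  · simp only [hterm]
    exact mul_nonneg (hA k r f.1 hr f.2) (hB k f.1 c f.2 hc)


variable {k n : ℕ}

/-- Schur complement entry w.r.t. pivot (r0,c0). -/
noncomputable def Sch {n : ℕ} (A : Matrix (Fin n) (Fin n) ℝ) (r0 c0 : Fin n) : Matrix (Fin n) (Fin n) ℝ :=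
  Matrix.of fun p q => A p q - A p c0 * A r0 q / A r0 c0

lemma det_border (B : Matrix (Fin (k+1)) (Fin (k+1)) ℝ)
    (hd : B (Fin.last k) (Fin.last k) ≠ 0) :
    B.det = B (Fin.last k) (Fin.last k) *
      (Matrix.of fun i j : Fin k => B i.castSucc j.castSucc
        - B i.castSucc (Fin.last k) * B (Fin.last k) j.castSucc
          / B (Fin.last k) (Fin.last k)).det := by
  set d := B (Fin.last k) (Fin.last k) with hdef
  let A' : Matrix (Fin k) (Fin k) ℝ := Matrix.of fun i j => B i.castSucc j.castSucc
  let Bb : Matrix (Fin k) (Fin 1) ℝ := Matrix.of fun i _ => B i.castSucc (Fin.last k)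
  let Cc : Matrix (Fin 1) (Fin k) ℝ := Matrix.of fun _ j => B (Fin.last k) j.castSucc
  let Dd : Matrix (Fin 1) (Fin 1) ℝ := Matrix.of fun _ _ => d
  have hDinv : Invertible Dd := by
    refine ⟨Matrix.of fun _ _ => d⁻¹, ?_, ?_⟩
    · ext i j
      simp [Dd, Matrix.mul_apply, Matrix.one_apply, inv_mul_cancel₀ hd,
        Subsingleton.elim i j]
    · ext i j
      simp [Dd, Matrix.mul_apply, Matrix.one_apply, mul_inv_cancel₀ hd,
        Subsingleton.elim i j]
  have hsub : B.submatrix finSumFinEquiv finSumFinEquiv = Matrix.fromBlocks A' Bb Cc Dd := by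
    ext i j
    cases i with
    | inl i =>
      cases j with
      | inl j => rfl
      | inr j =>
        have : finSumFinEquiv (Sum.inr j) = Fin.last k := by
          ext; simp [finSumFinEquiv, Fin.natAdd, Subsingleton.elim j 0]
        simp only [this, Matrix.submatrix_apply, Matrix.fromBlocks, A', Bb,
          Matrix.fromBlocks_apply₁₂]
        rfl
    | inr i =>
      have hi : finSumFinEquiv (Sum.inr i) = Fin.last k := by
        ext; simp [finSumFinEquiv, Fin.natAdd, Subsingleton.elim i 0]
      cases j with
      | inl j =>
        simp only [hi, Matrix.submatrix_apply, Matrix.fromBlocks_apply₂₁]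
        rfl
      | inr j =>
        have hj : finSumFinEquiv (Sum.inr j) = Fin.last k := by
          ext; simp [finSumFinEquiv, Fin.natAdd, Subsingleton.elim j 0]
        simp only [hi, hj, Matrix.submatrix_apply, Matrix.fromBlocks_apply₂₂]
        rfl
  have hdet : B.det = (Matrix.fromBlocks A' Bb Cc Dd).det := by
    rw [← hsub, Matrix.det_submatrix_equiv_self]
  rw [hdet, Matrix.det_fromBlocks₂₂]
  have hDd : Dd.det = d := by simp [Dd, Matrix.det_fin_one]
  have hinv : (⅟ Dd) = Matrix.of fun _ _ => d⁻¹ := by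
    letI := hDinv
    exact invOf_eq_right_inv (by
      ext i j
      simp [Dd, Matrix.mul_apply, Matrix.one_apply, mul_inv_cancel₀ hd,
        Subsingleton.elim i j])
  have hSchur : A' - Bb * ⅟ Dd * Cc
      = Matrix.of (fun i j : Fin k => B i.castSucc j.castSucc
        - B i.castSucc (Fin.last k) * B (Fin.last k) j.castSucc / d) := by
    rw [hinv]
    ext i j
    simp only [A', Bb, Cc, Matrix.mul_apply, Matrix.sub_apply, Matrix.of_apply,
      Finset.univ_unique, Finset.sum_singleton, div_eq_mul_inv]
    ring
  rw [hDd, hSchur]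

lemma strictMono_snoc {r : Fin k → Fin n} {r0 : Fin n} (hr : StrictMono r)
    (h : ∀ i, r i < r0) : StrictMono (Fin.snoc r r0) := by
  intro i j hij
  induction j using Fin.lastCases with
  | last =>
    have hi : i ≠ Fin.last k := ne_of_lt hij
    obtain ⟨i', rfl⟩ := Fin.exists_castSucc_eq.mpr hi
    rw [Fin.snoc_castSucc, Fin.snoc_last]
    exact h i'
  | cast j' =>
    have hi : i ≠ Fin.last k := by
      intro hh
      rw [hh] at hij
      exact absurd hij (not_lt.2 (Fin.le_last _))
    obtain ⟨i', rfl⟩ := Fin.exists_castSucc_eq.mpr hi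
    rw [Fin.snoc_castSucc, Fin.snoc_castSucc]
    exact hr (by exact_mod_cast Fin.castSucc_lt_castSucc_iff.mp hij)

lemma schur_minor {A : Matrix (Fin n) (Fin n) ℝ} {r0 c0 : Fin n} (hd : A r0 c0 ≠ 0)
    (r c : Fin k → Fin n) :
    (A.submatrix (Fin.snoc r r0) (Fin.snoc c c0)).det
      = A r0 c0 * ((Sch A r0 c0).submatrix r c).det := by
  have h1 : (A.submatrix (Fin.snoc r r0) (Fin.snoc c c0)) (Fin.last k) (Fin.last k) = A r0 c0 := by
    simp [Matrix.submatrix_apply, Fin.snoc_last]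
  rw [det_border _ (by rw [h1]; exact hd)]
  rw [h1]
  have h2 : (Matrix.of fun i j : Fin k =>
      (A.submatrix (Fin.snoc r r0) (Fin.snoc c c0)) i.castSucc j.castSucc
      - (A.submatrix (Fin.snoc r r0) (Fin.snoc c c0)) i.castSucc (Fin.last k)
        * (A.submatrix (Fin.snoc r r0) (Fin.snoc c c0)) (Fin.last k) j.castSucc / A r0 c0)
      = (Sch A r0 c0).submatrix r c := by
    ext i j
    simp [Matrix.submatrix_apply, Fin.snoc_castSucc, Fin.snoc_last, Sch]
  rw [h2]


noncomputable def revM {n : ℕ} (A : Matrix (Fin n) (Fin n) ℝ) : Matrix (Fin n) (Fin n) ℝ :=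
  A.submatrix Fin.rev Fin.rev

lemma det_revM (A : Matrix (Fin n) (Fin n) ℝ) : (revM A).det = A.det := by
  have : revM A = A.submatrix (Fin.revPerm : Equiv.Perm (Fin n)) Fin.revPerm := rfl
  rw [this, Matrix.det_submatrix_equiv_self]

lemma tn_revM {A : Matrix (Fin n) (Fin n) ℝ} (hA : TotallyNonneg A) :
    TotallyNonneg (revM A) := by
  intro k r c hr hc
  have hM : (revM A).submatrix r c
      = (A.submatrix (fun i : Fin k => Fin.rev (r (Fin.rev i)))
          (fun j : Fin k => Fin.rev (c (Fin.rev j)))).submatrix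
          (Fin.revPerm : Equiv.Perm (Fin k)) Fin.revPerm := by
    ext i j
    simp [revM, Matrix.submatrix_apply, Fin.rev_rev]
  rw [hM, Matrix.det_submatrix_equiv_self]
  refine hA k _ _ ?_ ?_
  · intro i j hij
    exact Fin.rev_lt_rev.mpr (hr (Fin.rev_lt_rev.mpr (by simpa [Fin.rev_rev] using hij)))
  · intro i j hij
    exact Fin.rev_lt_rev.mpr (hc (Fin.rev_lt_rev.mpr (by simpa [Fin.rev_rev] using hij)))

lemma corner_pos {A : Matrix (Fin (n+1)) (Fin (n+1)) ℝ} (hA : TotallyNonneg A)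
    (hdet : A.det ≠ 0) : 0 < A (Fin.last n) (Fin.last n) := by
  rcases lt_or_eq_of_le (tn1 hA (Fin.last n) (Fin.last n)) with h | h
  · exact h
  exfalso
  have hzero : ∀ p q : Fin (n+1), p < Fin.last n → q < Fin.last n →
      A p (Fin.last n) * A (Fin.last n) q = 0 := by
    intro p q hp hq
    have h2 := tn2 hA hp hq
    rw [← h] at h2
    have hge : 0 ≤ A p (Fin.last n) * A (Fin.last n) q :=
      mul_nonneg (tn1 hA _ _) (tn1 hA _ _)
    nlinarith
  by_cases hcol : ∀ p, A p (Fin.last n) = 0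
  · exact hdet (Matrix.det_eq_zero_of_column_eq_zero (Fin.last n) hcol)
  · push_neg at hcol
    obtain ⟨p0, hp0⟩ := hcol
    have hp0lt : p0 < Fin.last n := by
      rcases lt_or_eq_of_le (Fin.le_last p0) with hh | hh
      · exact hh
      · exact absurd (hh ▸ h.symm) hp0
    have hrow : ∀ q, A (Fin.last n) q = 0 := by
      intro q
      rcases lt_or_eq_of_le (Fin.le_last q) with hq | hq
      · have := hzero p0 q hp0lt hq
        rcases mul_eq_zero.mp this with h1 | h1
        · exact absurd h1 hp0
        · exact h1
      · rw [hq, ← h]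
    exact hdet (Matrix.det_eq_zero_of_row_eq_zero (Fin.last n) hrow)

/-- All principal minors of a nonsingular TN matrix are positive. -/
theorem prin_pos : ∀ n, ∀ A : Matrix (Fin n) (Fin n) ℝ, TotallyNonneg A → 0 < A.det →
    ∀ k (r : Fin k → Fin n), StrictMono r → 0 < (A.submatrix r r).det := by
  intro n
  induction n with
  | zero =>
    intro A hA hdet k r hr
    cases k with
    | zero => simp [Matrix.det_isEmpty]
    | succ k => exact (r 0).elim0
  | succ n IH =>
    intro A hA hdet k r hr
    -- minors containing the last index, for an arbitrary TN nonsingular matrix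
    have hlast : ∀ M : Matrix (Fin (n+1)) (Fin (n+1)) ℝ, TotallyNonneg M → 0 < M.det →
        ∀ (m : ℕ) (u : Fin (m+1) → Fin (n+1)), StrictMono u →
        u (Fin.last m) = Fin.last n → 0 < (M.submatrix u u).det := by
      intro A hA hdet m u hu hul
      have hd : 0 < A (Fin.last n) (Fin.last n) := corner_pos hA (ne_of_gt hdet)
      set S : Matrix (Fin n) (Fin n) ℝ :=
        (Sch A (Fin.last n) (Fin.last n)).submatrix Fin.castSucc Fin.castSucc with hSdef
      have hminor : ∀ (m : ℕ) (u v : Fin m → Fin n),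
          (S.submatrix u v).det
          = (A.submatrix (Fin.snoc (fun i => (u i).castSucc) (Fin.last n))
              (Fin.snoc (fun j => (v j).castSucc) (Fin.last n))).det
            / A (Fin.last n) (Fin.last n) := by
        intro m u v
        rw [schur_minor (ne_of_gt hd)]
        rw [show (Sch A (Fin.last n) (Fin.last n)).submatrix
              (fun i => (u i).castSucc) (fun j => (v j).castSucc)
            = S.submatrix u v from rfl]
        field_simp
      have hS_tn : TotallyNonneg S := by
        intro m' u' v' hu' hv'
        rw [hminor]
        refine div_nonneg ?_ (le_of_lt hd)
        refine hA _ _ _ ?_ ?_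
        · exact strictMono_snoc (Fin.strictMono_castSucc.comp hu')
            (fun i => Fin.castSucc_lt_last _)
        · exact strictMono_snoc (Fin.strictMono_castSucc.comp hv')
            (fun i => Fin.castSucc_lt_last _)
      have hS_det : 0 < S.det := by
        have h1 : S.det = (S.submatrix id id).det := by rw [Matrix.submatrix_id_id]
        rw [h1, hminor]
        have hsnoc : Fin.snoc (fun i : Fin n => (id i : Fin n).castSucc) (Fin.last n)
            = (id : Fin (n+1) → Fin (n+1)) := by
          funext i
          induction i using Fin.lastCases with
          | last => simp
          | cast i' => simp
        rw [hsnoc, Matrix.submatrix_id_id]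
        positivity
      have hlt : ∀ i : Fin m, u i.castSucc < Fin.last n := by
        intro i
        rw [← hul]
        exact hu (Fin.castSucc_lt_last i)
      set u' : Fin m → Fin n := fun i => (u i.castSucc).castLT (by
        have := hlt i
        simpa [Fin.lt_def] using this) with hu'def
      have hu'mono : StrictMono u' := by
        intro i j hij
        have h5 : u i.castSucc < u j.castSucc := hu (Fin.castSucc_lt_castSucc_iff.mpr hij)
        exact h5
      have husnoc : Fin.snoc (fun i => (u' i).castSucc) (Fin.last n) = u := by
        funext i
        induction i using Fin.lastCases with
        | last => simp [hul]
        | cast i' => simp [hu'def, Fin.castSucc_castLT]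
      have := hminor m u' u'
      rw [husnoc] at this
      have hApos : 0 < (A.submatrix u u).det := by
        have hSpos : 0 < (S.submatrix u' u').det := IH S hS_tn hS_det m u' hu'mono
        rw [this] at hSpos
        have := mul_pos hSpos hd
        calc (0:ℝ) < (A.submatrix u u).det / A (Fin.last n) (Fin.last n)
              * A (Fin.last n) (Fin.last n) := this
          _ = (A.submatrix u u).det := by field_simp
      exact hApos
    -- main case split
    cases k with
    | zero => simp [Matrix.det_isEmpty]
    | succ m =>
      by_cases hcase : r (Fin.last m) = Fin.last n
      · exact hlast A hA hdet m r hr hcase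
      · -- all values below last: pass to the leading principal submatrix
        have hrlt : ∀ i, r i < Fin.last n := by
          intro i
          rcases lt_or_eq_of_le (Fin.le_last (r i)) with hh | hh
          · exact hh
          · exfalso
            have : r i ≤ r (Fin.last m) := hr.monotone (Fin.le_last i)
            have h2 : r (Fin.last m) = Fin.last n := le_antisymm (Fin.le_last _) (hh ▸ this)
            exact hcase h2
        set B : Matrix (Fin n) (Fin n) ℝ := A.submatrix Fin.castSucc Fin.castSucc with hBdef
        have hB_tn : TotallyNonneg B :=
          tn_submatrix hA Fin.strictMono_castSucc Fin.strictMono_castSucc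
        have hB_det : 0 < B.det := by
          cases n with
          | zero => simp [Matrix.det_isEmpty]
          | succ n' =>
            -- B.det = det ((revM A).submatrix succ succ) and the latter contains the last index
            have h1 : revM B = (revM A).submatrix Fin.succ Fin.succ := by
              ext i j
              simp [revM, hBdef, Matrix.submatrix_apply, Fin.rev_succ]
            have h2 : 0 < ((revM A).submatrix Fin.succ Fin.succ).det :=
              hlast (revM A) (tn_revM hA) (by rw [det_revM]; exact hdet) n' Fin.succ
                Fin.strictMono_succ (by simp)
            have h3 : B.det = (revM B).det := (det_revM B).symm
            rw [h3, h1]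
            exact h2
        have hrB : ∀ i, (r i).val < n := fun i => by
          have := hrlt i; simpa [Fin.lt_def] using this
        set r' : Fin (m+1) → Fin n := fun i => (r i).castLT (hrB i) with hr'def
        have hr'mono : StrictMono r' := by
          intro i j hij
          exact hr hij
        have hfact : A.submatrix r r = B.submatrix r' r' := by
          ext i j
          simp [hBdef, hr'def, Matrix.submatrix_apply, Fin.castSucc_castLT]
        rw [hfact]
        exact IH B hB_tn hB_det (m+1) r' hr'mono


lemma det2_pair {n : ℕ} {A : Matrix (Fin n) (Fin n) ℝ} {a b c d : Fin n} :
    (A.submatrix ![a, b] ![c, d]).det = A a c * A b d - A a d * A b c := by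
  rw [Matrix.det_fin_two]
  simp

/-- Positivity criterion for 2x2 minors whose "block" contains two diagonal positions. -/
lemma gk2 {n : ℕ} {A : Matrix (Fin n) (Fin n) ℝ} (hA : TotallyNonneg A) (hdet : 0 < A.det)
    {p p' q q' t t' : Fin n} (hpp : p < p') (hqq : q < q')
    (hpt : p ≤ t) (hqt : q ≤ t) (ht : t < t')
    (ht'p : t' ≤ p') (ht'q : t' ≤ q')
    (hpq : 0 < A p q) (hp'q' : 0 < A p' q') :
    0 < A p q * A p' q' - A p q' * A p' q := by
  rcases lt_or_eq_of_le (tn2 hA hpp hqq) with h | h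
  · exact h
  exfalso
  have h1 : A p q * A p' q' = A p q' * A p' q := by linarith
  have hprod : 0 < A p q' * A p' q := by rw [← h1]; exact mul_pos hpq hp'q'
  have hpq' : 0 < A p q' := by
    rcases lt_or_eq_of_le (tn1 hA p q') with hh | hh
    · exact hh
    · rw [← hh] at hprod; simpa using hprod
  have hp'q : 0 < A p' q := by
    rcases lt_or_eq_of_le (tn1 hA p' q) with hh | hh
    · exact hh
    · rw [← hh] at hprod; simpa using hprod
  have colInterp : ∀ c : Fin n, q ≤ c → c ≤ q' → A p q * A p' c = A p c * A p' q := by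
    intro c hqc hcq'
    rcases eq_or_lt_of_le hqc with rfl | hqc
    · ring
    rcases eq_or_lt_of_le hcq' with rfl | hcq'
    · linarith [h1]
    have hD := tn2 hA hpp hqc
    have hD' := tn2 hA hpp hcq'
    have h2 : 0 ≤ (A p c * A p' q' - A p q' * A p' c) * A p' q :=
      mul_nonneg hD' (tn1 hA p' q)
    have h4 : A p' q' * (A p c * A p' q - A p q * A p' c)
        = (A p c * A p' q' - A p q' * A p' c) * A p' q := by
      linear_combination (-(A p' c)) * h1
    have h5 : 0 ≤ A p' q' * (A p c * A p' q - A p q * A p' c) := by rw [h4]; exact h2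
    have h6 : 0 ≤ A p c * A p' q - A p q * A p' c := by
      by_contra hneg
      push_neg at hneg
      have hpos := mul_pos hp'q' (by linarith : (0:ℝ) < A p q * A p' c - A p c * A p' q)
      nlinarith [h5, hpos]
    linarith [hD, h6]
  have inner : ∀ (rr c : Fin n), p ≤ rr → rr ≤ p' → q ≤ c → c ≤ q' →
      A p q * A rr c = A p c * A rr q := by
    intro rr c hprr hrrp' hqc hcq'
    rcases eq_or_lt_of_le hprr with rfl | hprr
    · ring
    rcases eq_or_lt_of_le hqc with rfl | hqc
    · ring
    rcases eq_or_lt_of_le hrrp' with rfl | hrrp'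
    · exact colInterp c (le_of_lt hqc) hcq'
    have hD1 := tn2 hA hprr hqc
    have hD2 := tn2 hA hrrp' hqc
    have hcol := colInterp c (le_of_lt hqc) hcq'
    have h2 : 0 ≤ (A rr q * A p' c - A rr c * A p' q) * A p q :=
      mul_nonneg hD2 (tn1 hA p q)
    have h4 : (A rr q * A p' c - A rr c * A p' q) * A p q
        = A p' q * (A rr q * A p c - A rr c * A p q)
          + A rr q * (A p' c * A p q - A p c * A p' q) := by ring
    have h5 : 0 ≤ A p' q * (A rr q * A p c - A rr c * A p q) := by
      have hcol' : A p' c * A p q - A p c * A p' q = 0 := by linarith [hcol]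
      have h7 : A rr q * (A p' c * A p q - A p c * A p' q) = 0 := by rw [hcol']; ring
      linarith [h2, h4, h7]
    have h6 : 0 ≤ A rr q * A p c - A rr c * A p q := by
      by_contra hneg
      push_neg at hneg
      have hpos := mul_pos hp'q (by linarith : (0:ℝ) < A rr c * A p q - A rr q * A p c)
      nlinarith [h5, hpos]
    linarith [hD1, h6]
  have htp' : t ≤ p' := le_of_lt (lt_of_lt_of_le ht ht'p)
  have htq' : t ≤ q' := le_of_lt (lt_of_lt_of_le ht ht'q)
  have hpt' : p ≤ t' := le_trans hpt (le_of_lt ht)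
  have hqt' : q ≤ t' := le_trans hqt (le_of_lt ht)
  have e1 := inner t t hpt htp' hqt htq'
  have e2 := inner t t' hpt htp' hqt' ht'q
  have e3 := inner t' t hpt' ht'p hqt htq'
  have e4 := inner t' t' hpt' ht'p hqt' ht'q
  have hprin : 0 < A t t * A t' t' - A t t' * A t' t := by
    have hp := prin_pos n A hA hdet 2 ![t, t'] (strictMono_pair ht)
    rw [det2_pair] at hp
    exact hp
  have hzero : A p q ^ 2 * (A t t * A t' t' - A t t' * A t' t) = 0 := by
    calc A p q ^ 2 * (A t t * A t' t' - A t t' * A t' t)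
        = (A p q * A t t) * (A p q * A t' t') - (A p q * A t t') * (A p q * A t' t) := by ring
      _ = (A p t * A t q) * (A p t' * A t' q) - (A p t' * A t q) * (A p t * A t' q) := by
          rw [e1, e2, e3, e4]
      _ = 0 := by ring
  exact absurd hzero (ne_of_gt (mul_pos (pow_pos hpq 2) hprin))


def Band {n : ℕ} (A : Matrix (Fin n) (Fin n) ℝ) : Prop :=
  ∀ i j : Fin n, (i.val + 1 = j.val ∨ j.val + 1 = i.val) → 0 < A i j

lemma diag_pos {n : ℕ} {A : Matrix (Fin n) (Fin n) ℝ} (hA : TotallyNonneg A)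
    (hdet : 0 < A.det) (t : Fin n) : 0 < A t t := by
  have := prin_pos n A hA hdet 1 ![t] strictMono_single
  rw [Matrix.det_fin_one] at this
  simpa using this

lemma band_revM {n : ℕ} {A : Matrix (Fin n) (Fin n) ℝ} (hb : Band A) : Band (revM A) := by
  intro i j hij
  refine hb i.rev j.rev ?_
  rcases hij with h | h
  · right
    have h1 := Fin.rev_lt_rev (i := j) (j := i)
    simp only [Fin.val_rev]
    omega
  · left
    simp only [Fin.val_rev]
    omega

lemma band_transpose {n : ℕ} {A : Matrix (Fin n) (Fin n) ℝ} (hb : Band A) : Band Aᵀ := by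
  intro i j hij
  exact hb j i (hij.symm.imp id id)

lemma det_rev_minor {n k : ℕ} (A : Matrix (Fin n) (Fin n) ℝ) (r c : Fin k → Fin n) :
    ((revM A).submatrix r c).det
      = (A.submatrix (fun i => (r (Fin.rev i)).rev) (fun j => (c (Fin.rev j)).rev)).det := by
  have hM : (revM A).submatrix r c
      = (A.submatrix (fun i : Fin k => (r (Fin.rev i)).rev)
          (fun j : Fin k => (c (Fin.rev j)).rev)).submatrix
          (Fin.revPerm : Equiv.Perm (Fin k)) Fin.revPerm := by
    ext i j
    simp [revM, Matrix.submatrix_apply, Fin.rev_rev]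
  rw [hM, Matrix.det_submatrix_equiv_self]

lemma band_schur {n : ℕ} {A : Matrix (Fin (n+1)) (Fin (n+1)) ℝ} (hA : TotallyNonneg A)
    (hdet : 0 < A.det) (hb : Band A) :
    Band ((Sch A (Fin.last n) (Fin.last n)).submatrix Fin.castSucc Fin.castSucc) := by
  intro i j hij
  have hd := diag_pos hA hdet (Fin.last n)
  have hband : 0 < A i.castSucc j.castSucc := by
    refine hb _ _ ?_
    simpa using hij
  have hgk := gk2 hA hdet (p := i.castSucc) (p' := Fin.last n) (q := j.castSucc)
    (q' := Fin.last n) (t := (max i j).castSucc) (t' := (max i j).succ)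
    (Fin.castSucc_lt_last i) (Fin.castSucc_lt_last j)
    (Fin.castSucc_le_castSucc_iff.mpr (le_max_left i j))
    (Fin.castSucc_le_castSucc_iff.mpr (le_max_right i j))
    (Fin.castSucc_lt_succ) (Fin.le_last _) (Fin.le_last _) hband hd
  have hentry : ((Sch A (Fin.last n) (Fin.last n)).submatrix Fin.castSucc Fin.castSucc) i j
      = (A i.castSucc j.castSucc * A (Fin.last n) (Fin.last n)
          - A i.castSucc (Fin.last n) * A (Fin.last n) j.castSucc)
        / A (Fin.last n) (Fin.last n) := by
    simp only [Matrix.submatrix_apply, Sch, Matrix.of_apply]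
    field_simp
  rw [hentry]
  exact div_pos hgk hd

/-- deleting row 1 and column 0 of a banded nonsingular TN matrix gives a positive minor -/
lemma wlow : ∀ (m : ℕ) (A : Matrix (Fin (m+2)) (Fin (m+2)) ℝ), TotallyNonneg A →
    0 < A.det → Band A →
    0 < (A.submatrix (Fin.succAbove 1) (Fin.succAbove 0)).det := by
  intro m
  induction m with
  | zero =>
    intro A hA hdet hb
    rw [Matrix.det_fin_one]
    exact hb _ _ (Or.inl (by decide))
  | succ m IH =>
    intro A hA hdet hb
    have hd : 0 < A (Fin.last (m+2)) (Fin.last (m+2)) := diag_pos hA hdet _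
    set S : Matrix (Fin (m+2)) (Fin (m+2)) ℝ :=
      (Sch A (Fin.last (m+2)) (Fin.last (m+2))).submatrix Fin.castSucc Fin.castSucc with hSdef
    have hminor : ∀ (k : ℕ) (u v : Fin k → Fin (m+2)),
        (S.submatrix u v).det
        = (A.submatrix (Fin.snoc (fun i => (u i).castSucc) (Fin.last (m+2)))
            (Fin.snoc (fun j => (v j).castSucc) (Fin.last (m+2)))).det
          / A (Fin.last (m+2)) (Fin.last (m+2)) := by
      intro k u v
      rw [schur_minor (ne_of_gt hd)]
      rw [show (Sch A (Fin.last (m+2)) (Fin.last (m+2))).submatrix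
            (fun i => (u i).castSucc) (fun j => (v j).castSucc)
          = S.submatrix u v from rfl]
      field_simp
    have hS_tn : TotallyNonneg S := by
      intro k u v hu hv
      rw [hminor]
      refine div_nonneg (hA _ _ _ ?_ ?_) (le_of_lt hd)
      · exact strictMono_snoc (Fin.strictMono_castSucc.comp hu)
          (fun i => Fin.castSucc_lt_last _)
      · exact strictMono_snoc (Fin.strictMono_castSucc.comp hv)
          (fun i => Fin.castSucc_lt_last _)
    have hS_det : 0 < S.det := by
      have h1 : S.det = (S.submatrix id id).det := by rw [Matrix.submatrix_id_id]
      rw [h1, hminor]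
      have hsnoc : Fin.snoc (fun i : Fin (m+2) => ((id i : Fin (m+2))).castSucc)
          (Fin.last (m+2)) = (id : Fin (m+3) → Fin (m+3)) := by
        funext i
        induction i using Fin.lastCases with
        | last => simp
        | cast i' => simp
      rw [hsnoc, Matrix.submatrix_id_id]
      positivity
    have hS_band : Band S := band_schur hA hdet hb
    have hrow : (Fin.succAbove (1 : Fin (m+3)) : Fin (m+2) → Fin (m+3))
        = Fin.snoc (fun i => ((Fin.succAbove (1 : Fin (m+2)) i)).castSucc) (Fin.last (m+2)) := by
      funext i
      induction i using Fin.lastCases with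
      | last =>
        rw [Fin.snoc_last]
        ext
        simp [Fin.succAbove, Fin.lt_def]
      | cast i' =>
        rw [Fin.snoc_castSucc]
        unfold Fin.succAbove
        split <;> split <;> ext <;>
          simp_all [Fin.lt_def] <;> omega
    have hcol : (Fin.succAbove (0 : Fin (m+3)) : Fin (m+2) → Fin (m+3))
        = Fin.snoc (fun i => ((Fin.succAbove (0 : Fin (m+2)) i)).castSucc) (Fin.last (m+2)) := by
      funext i
      induction i using Fin.lastCases with
      | last =>
        rw [Fin.snoc_last]
        ext
        simp [Fin.succAbove, Fin.lt_def]
      | cast i' =>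
        rw [Fin.snoc_castSucc]
        unfold Fin.succAbove
        split <;> split <;> ext <;>
          simp_all [Fin.lt_def] <;> omega
    have hkey := hminor (m+1) (Fin.succAbove (1 : Fin (m+2))) (Fin.succAbove (0 : Fin (m+2)))
    rw [← hrow, ← hcol] at hkey
    have hSpos := IH S hS_tn hS_det hS_band
    rw [hkey] at hSpos
    have := mul_pos hSpos hd
    calc (0:ℝ) < (A.submatrix (Fin.succAbove 1) (Fin.succAbove 0)).det
          / A (Fin.last (m+2)) (Fin.last (m+2)) * A (Fin.last (m+2)) (Fin.last (m+2)) := this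
      _ = (A.submatrix (Fin.succAbove 1) (Fin.succAbove 0)).det := by field_simp

/-- deleting row n-2 and the last column -/
lemma wa {m : ℕ} {A : Matrix (Fin (m+2)) (Fin (m+2)) ℝ} (hA : TotallyNonneg A)
    (hdet : 0 < A.det) (hb : Band A) :
    0 < (A.submatrix (Fin.succAbove (Fin.rev 1)) (Fin.succAbove (Fin.rev 0))).det := by
  have h1 := wlow m (revM A) (tn_revM hA) (by rw [det_revM]; exact hdet) (band_revM hb)
  rw [det_rev_minor] at h1
  have hr : (fun i : Fin (m+1) => ((Fin.succAbove (1 : Fin (m+2)) (Fin.rev i))).rev)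
      = Fin.succAbove (Fin.rev (1 : Fin (m+2))) := by
    funext i
    exact (Fin.succAbove_rev_left _ _).symm
  have hc : (fun i : Fin (m+1) => ((Fin.succAbove (0 : Fin (m+2)) (Fin.rev i))).rev)
      = Fin.succAbove (Fin.rev (0 : Fin (m+2))) := by
    funext i
    exact (Fin.succAbove_rev_left _ _).symm
  rw [hr, hc] at h1
  exact h1

/-- deleting the last row and column n-2 -/
lemma wb {m : ℕ} {A : Matrix (Fin (m+2)) (Fin (m+2)) ℝ} (hA : TotallyNonneg A)
    (hdet : 0 < A.det) (hb : Band A) :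
    0 < (A.submatrix (Fin.succAbove (Fin.rev 0)) (Fin.succAbove (Fin.rev 1))).det := by
  have h1 := wa (tn_transpose hA) (by rw [Matrix.det_transpose]; exact hdet) (band_transpose hb)
  have h2 : (Aᵀ.submatrix (Fin.succAbove (Fin.rev 1)) (Fin.succAbove (Fin.rev 0)))
      = (A.submatrix (Fin.succAbove (Fin.rev 0)) (Fin.succAbove (Fin.rev 1)))ᵀ := by
    ext i j
    simp
  rw [h2, Matrix.det_transpose] at h1
  exact h1

section schurpack
variable {n : ℕ} {A : Matrix (Fin (n+1)) (Fin (n+1)) ℝ}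

lemma schur_minor' (hd : A (Fin.last n) (Fin.last n) ≠ 0) (k : ℕ) (u v : Fin k → Fin n) :
    (((Sch A (Fin.last n) (Fin.last n)).submatrix Fin.castSucc Fin.castSucc).submatrix u v).det
    = (A.submatrix (Fin.snoc (fun i => (u i).castSucc) (Fin.last n))
        (Fin.snoc (fun j => (v j).castSucc) (Fin.last n))).det / A (Fin.last n) (Fin.last n) := by
  rw [schur_minor hd]
  rw [show (Sch A (Fin.last n) (Fin.last n)).submatrix
        (fun i => (u i).castSucc) (fun j => (v j).castSucc)
      = ((Sch A (Fin.last n) (Fin.last n)).submatrix Fin.castSucc Fin.castSucc).submatrix u v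
      from rfl]
  field_simp

lemma schur_tn (hA : TotallyNonneg A) (hd : 0 < A (Fin.last n) (Fin.last n)) :
    TotallyNonneg ((Sch A (Fin.last n) (Fin.last n)).submatrix Fin.castSucc Fin.castSucc) := by
  intro k u v hu hv
  rw [schur_minor' (ne_of_gt hd)]
  refine div_nonneg (hA _ _ _ ?_ ?_) (le_of_lt hd)
  · exact strictMono_snoc (Fin.strictMono_castSucc.comp hu) (fun i => Fin.castSucc_lt_last _)
  · exact strictMono_snoc (Fin.strictMono_castSucc.comp hv) (fun i => Fin.castSucc_lt_last _)

lemma schur_det (hdet : 0 < A.det) (hd : 0 < A (Fin.last n) (Fin.last n)) :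
    0 < ((Sch A (Fin.last n) (Fin.last n)).submatrix Fin.castSucc Fin.castSucc).det := by
  set S := (Sch A (Fin.last n) (Fin.last n)).submatrix Fin.castSucc Fin.castSucc with hS
  have h1 : S.det = (S.submatrix id id).det := by rw [Matrix.submatrix_id_id]
  rw [h1, hS, schur_minor' (ne_of_gt hd)]
  have hsnoc : Fin.snoc (fun i : Fin n => ((id i : Fin n)).castSucc) (Fin.last n)
      = (id : Fin (n+1) → Fin (n+1)) := by
    funext i
    induction i using Fin.lastCases with
    | last => simp
    | cast i' => simp
  rw [hsnoc, Matrix.submatrix_id_id]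
  positivity

end schurpack

/-- positivity of minors given by a single unit upward column move -/
lemma mup : ∀ (n : ℕ) (A : Matrix (Fin n) (Fin n) ℝ), TotallyNonneg A → 0 < A.det → Band A →
    ∀ (k : ℕ) (r c : Fin k → Fin n) (j : Fin k), StrictMono r → StrictMono c →
    (∀ i, i ≠ j → c i = r i) → ((c j).val = (r j).val + 1) →
    0 < (A.submatrix r c).det := by
  intro n
  induction n with
  | zero =>
    intro A hA hdet hb k r c j hr hc hmove hj
    cases k with
    | zero => exact j.elim0
    | succ k' => exact (r 0).elim0
  | succ n IH =>
    intro A hA hdet hb k r c j hr hc hmove hj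
    cases k with
    | zero => exact j.elim0
    | succ k' =>
      by_cases hrt : r (Fin.last k') = Fin.last n
      · -- row top is last; then also column top is last, and the move is below the top
        have hjne : j ≠ Fin.last k' := by
          intro hjeq
          rw [hjeq, hrt] at hj
          have := (c (Fin.last k')).isLt
          simp only [Fin.val_last] at hj
          omega
        have hct : c (Fin.last k') = Fin.last n := by rw [hmove _ (Ne.symm hjne), hrt]
        have hd : 0 < A (Fin.last n) (Fin.last n) := diag_pos hA hdet _
        -- decompose
        have hrlt : ∀ i : Fin k', (r i.castSucc).val < n := by
          intro i
          have h1 : r i.castSucc < r (Fin.last k') := hr (Fin.castSucc_lt_last i)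
          rw [hrt] at h1
          simpa [Fin.lt_def] using h1
        have hclt : ∀ i : Fin k', (c i.castSucc).val < n := by
          intro i
          have h1 : c i.castSucc < c (Fin.last k') := hc (Fin.castSucc_lt_last i)
          rw [hct] at h1
          simpa [Fin.lt_def] using h1
        set r₂ : Fin k' → Fin n := fun i => (r i.castSucc).castLT (hrlt i) with hr₂
        set c₂ : Fin k' → Fin n := fun i => (c i.castSucc).castLT (hclt i) with hc₂
        have hr₂m : StrictMono r₂ := fun i i' h => hr (Fin.castSucc_lt_castSucc_iff.mpr h)
        have hc₂m : StrictMono c₂ := fun i i' h => hc (Fin.castSucc_lt_castSucc_iff.mpr h)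
        have hrsnoc : r = Fin.snoc (fun i => (r₂ i).castSucc) (Fin.last n) := by
          funext i
          induction i using Fin.lastCases with
          | last => simp [hrt]
          | cast i' => simp [hr₂, Fin.castSucc_castLT]
        have hcsnoc : c = Fin.snoc (fun i => (c₂ i).castSucc) (Fin.last n) := by
          funext i
          induction i using Fin.lastCases with
          | last => simp [hct]
          | cast i' => simp [hc₂, Fin.castSucc_castLT]
        have hkey : (A.submatrix r c).det
            = (((Sch A (Fin.last n) (Fin.last n)).submatrix Fin.castSucc
                Fin.castSucc).submatrix r₂ c₂).det * A (Fin.last n) (Fin.last n) := by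
          have h1 := schur_minor' (A := A) (ne_of_gt hd) k' r₂ c₂
          rw [eq_div_iff (ne_of_gt hd)] at h1
          rw [hrsnoc, hcsnoc, ← h1]
        rw [hkey]
        refine mul_pos ?_ hd
        -- the moved index below the top
        have hjcast : ∃ j₀ : Fin k', j₀.castSucc = j := by
          rcases Fin.exists_castSucc_eq.mpr hjne with ⟨j₀, hj₀⟩
          exact ⟨j₀, hj₀⟩
        obtain ⟨j₀, rfl⟩ := hjcast
        refine IH _ (schur_tn hA hd) (schur_det hdet hd) (band_schur hA hdet hb)
          k' r₂ c₂ j₀ hr₂m hc₂m ?_ ?_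
        · intro i hi
          have : i.castSucc ≠ j₀.castSucc := by
            simpa [Fin.castSucc_inj] using hi
          have := hmove i.castSucc this
          simp only [hr₂, hc₂]
          ext
          simp [this]
        · have := hj
          simpa [hr₂, hc₂] using this
      · -- row top below last
        by_cases hct : c (Fin.last k') = Fin.last n
        · -- boundary case: the move is at the top
          have hjeq : j = Fin.last k' := by
            by_contra hne
            exact hrt (by rw [← hmove _ (Ne.symm hne), hct])
          subst hjeq
          -- need n ≥ 1
          cases n with
          | zero =>
            exfalso
            rw [hct] at hj
            omega
          | succ m =>
            -- r top = ⟨m⟩ = rev 1, c top = last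
            have hrtop : r (Fin.last k') = (Fin.rev 1 : Fin (m+2)) := by
              ext
              rw [hct] at hj
              simp only [Fin.val_rev, Fin.val_last, Fin.val_one] at hj ⊢
              omega
            have hpiv : 0 < A (r (Fin.last k')) (Fin.last (m+1)) := by
              refine hb _ _ (Or.inl ?_)
              rw [hrtop]
              simp only [Fin.val_rev, Fin.val_last, Fin.val_one]
              omega
            have hrlow : ∀ i : Fin k', (r i.castSucc).val < m := by
              intro i
              have h1 : r i.castSucc < r (Fin.last k') := hr (Fin.castSucc_lt_last i)
              rw [hrtop] at h1
              simp only [Fin.lt_def, Fin.val_rev, Fin.val_one] at h1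
              omega
            set w : Fin m → Fin (m+2) := fun i => i.castSucc.castSucc with hw
            set T : Matrix (Fin m) (Fin m) ℝ :=
              (Sch A (r (Fin.last k')) (Fin.last (m+1))).submatrix w w with hT
            have hwmono : StrictMono w :=
              Fin.strictMono_castSucc.comp Fin.strictMono_castSucc
            have hwρ : ∀ i, w i < r (Fin.last k') := by
              intro i
              rw [hrtop]
              simp only [hw, Fin.lt_def, Fin.val_rev, Fin.coe_castSucc, Fin.val_one]
              omega
            have hwγ : ∀ i, w i < Fin.last (m+1) := by
              intro i
              simp only [hw, Fin.lt_def, Fin.val_last, Fin.coe_castSucc]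
              omega
            have hT_tn : TotallyNonneg T := by
              intro kk u v hu hv
              have hsm : (T.submatrix u v)
                  = (Sch A (r (Fin.last k')) (Fin.last (m+1))).submatrix (w ∘ u) (w ∘ v) := rfl
              have h2 := hA (kk+1) (Fin.snoc (w ∘ u) (r (Fin.last k')))
                (Fin.snoc (w ∘ v) (Fin.last (m+1)))
                (strictMono_snoc (hwmono.comp hu) (fun i => hwρ _))
                (strictMono_snoc (hwmono.comp hv) (fun i => hwγ _))
              rw [schur_minor (ne_of_gt hpiv)] at h2
              rw [hsm]
              nlinarith [hpiv, h2]
            have hsn1 : Fin.snoc w (r (Fin.last k')) = (Fin.castSucc : Fin (m+1) → Fin (m+2)) := by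
              funext i
              induction i using Fin.lastCases with
              | last =>
                rw [Fin.snoc_last, hrtop]
                ext
                simp only [Fin.val_rev, Fin.coe_castSucc, Fin.val_last, Fin.val_one]
                omega
              | cast i' =>
                rw [Fin.snoc_castSucc]
            have hsn2 : Fin.snoc w (Fin.last (m+1)) = Fin.succAbove (Fin.rev 1) := by
              funext i
              induction i using Fin.lastCases with
              | last =>
                rw [Fin.snoc_last]
                have hle : (Fin.rev 1 : Fin (m+2)) ≤ (Fin.last m).castSucc := by
                  rw [Fin.le_def]
                  simp only [Fin.val_rev, Fin.coe_castSucc, Fin.val_last, Fin.val_one]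
                  omega
                rw [Fin.succAbove_of_le_castSucc _ _ hle, Fin.succ_last]
              | cast i' =>
                have hlt : (i'.castSucc).castSucc < (Fin.rev 1 : Fin (m+2)) := by
                  rw [Fin.lt_def]
                  simp only [Fin.val_rev, Fin.coe_castSucc, Fin.val_one]
                  omega
                rw [Fin.snoc_castSucc, Fin.succAbove_of_castSucc_lt _ _ hlt]
            have hcastrev : (Fin.castSucc : Fin (m+1) → Fin (m+2))
                = Fin.succAbove (Fin.rev 0) := by
              funext i
              have h0 : (Fin.rev 0 : Fin (m+2)) = Fin.last (m+1) := by
                ext; simp [Fin.val_rev]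
              rw [h0, Fin.succAbove_last]
            have hT_det : 0 < T.det := by
              have h1 : T.det = (T.submatrix id id).det := by rw [Matrix.submatrix_id_id]
              have hsm : (T.submatrix id id)
                  = (Sch A (r (Fin.last k')) (Fin.last (m+1))).submatrix w w := rfl
              have h2 := schur_minor (A := A) (r0 := r (Fin.last k')) (c0 := Fin.last (m+1))
                (ne_of_gt hpiv) w w
              rw [hsn1, hsn2, hcastrev] at h2
              have h3 := wb hA hdet hb
              rw [h2] at h3
              rw [h1, hsm]
              nlinarith [hpiv, h3]
            have hrsnoc : r = Fin.snoc (fun i => r i.castSucc) (r (Fin.last k')) := by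
              funext i
              induction i using Fin.lastCases with
              | last => rw [Fin.snoc_last]
              | cast i' => rw [Fin.snoc_castSucc]
            have hcsnoc : c = Fin.snoc (fun i => r i.castSucc) (Fin.last (m+1)) := by
              funext i
              induction i using Fin.lastCases with
              | last => rw [Fin.snoc_last]; exact hct
              | cast i' =>
                rw [Fin.snoc_castSucc]
                exact hmove i'.castSucc (Fin.ne_of_lt (Fin.castSucc_lt_last i'))
            set r'' : Fin k' → Fin m := fun i => (r i.castSucc).castLT (hrlow i) with hr''
            have hr''m : StrictMono r'' := fun i i' h => hr (Fin.castSucc_lt_castSucc_iff.mpr h)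
            have hfact : (Sch A (r (Fin.last k')) (Fin.last (m+1))).submatrix
                  (fun i => r i.castSucc) (fun i => r i.castSucc)
                = T.submatrix r'' r'' := by
              ext i j
              simp only [hT, Matrix.submatrix_apply, hw, hr'']
              congr 1 <;> (ext; simp)
            have hkey := schur_minor (A := A) (r0 := r (Fin.last k')) (c0 := Fin.last (m+1))
              (ne_of_gt hpiv) (fun i => r i.castSucc) (fun i => r i.castSucc)
            rw [← hrsnoc, ← hcsnoc, hfact] at hkey
            rw [hkey]
            exact mul_pos hpiv (prin_pos m T hT_tn hT_det k' r'' hr''m)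
        · -- both tops below last: restrict to the leading principal submatrix
          have hrlt : ∀ i, (r i).val < n := by
            intro i
            have h1 : r i ≤ r (Fin.last k') := hr.monotone (Fin.le_last _)
            have h2 : r (Fin.last k') < Fin.last n :=
              lt_of_le_of_ne (Fin.le_last _) hrt
            have := lt_of_le_of_lt h1 h2
            simpa [Fin.lt_def] using this
          have hclt : ∀ i, (c i).val < n := by
            intro i
            have h1 : c i ≤ c (Fin.last k') := hc.monotone (Fin.le_last _)
            have h2 : c (Fin.last k') < Fin.last n :=
              lt_of_le_of_ne (Fin.le_last _) hct
            have := lt_of_le_of_lt h1 h2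
            simpa [Fin.lt_def] using this
          set r₂ : Fin (k'+1) → Fin n := fun i => (r i).castLT (hrlt i) with hr₂
          set c₂ : Fin (k'+1) → Fin n := fun i => (c i).castLT (hclt i) with hc₂
          have hr₂m : StrictMono r₂ := fun i i' h => hr h
          have hc₂m : StrictMono c₂ := fun i i' h => hc h
          set B : Matrix (Fin n) (Fin n) ℝ := A.submatrix Fin.castSucc Fin.castSucc with hB
          have hB_tn : TotallyNonneg B :=
            tn_submatrix hA Fin.strictMono_castSucc Fin.strictMono_castSucc
          have hB_det : 0 < B.det :=
            prin_pos (n+1) A hA hdet n Fin.castSucc Fin.strictMono_castSucc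
          have hB_band : Band B := by
            intro i j hij
            refine hb i.castSucc j.castSucc ?_
            simpa using hij
          have hfact : A.submatrix r c = B.submatrix r₂ c₂ := by
            ext i j
            simp [hB, hr₂, hc₂, Matrix.submatrix_apply, Fin.castSucc_castLT]
          rw [hfact]
          refine IH B hB_tn hB_det hB_band (k'+1) r₂ c₂ j hr₂m hc₂m ?_ ?_
          · intro i hi
            have := hmove i hi
            simp only [hr₂, hc₂]
            ext
            simp [this]
          · simpa [hr₂, hc₂] using hj

lemma mdown (n : ℕ) (A : Matrix (Fin n) (Fin n) ℝ) (hA : TotallyNonneg A) (hdet : 0 < A.det)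
    (hb : Band A) (k : ℕ) (r c : Fin k → Fin n) (j : Fin k) (hr : StrictMono r)
    (hc : StrictMono c) (hmove : ∀ i, i ≠ j → c i = r i) (hj : (r j).val = (c j).val + 1) :
    0 < (A.submatrix r c).det := by
  have h1 := mup n Aᵀ (tn_transpose hA) (by rw [Matrix.det_transpose]; exact hdet)
    (band_transpose hb) k c r j hc hr (fun i hi => (hmove i hi).symm) hj
  have h2 : Aᵀ.submatrix c r = (A.submatrix r c)ᵀ := by
    ext i j'; simp
  rw [h2, Matrix.det_transpose] at h1
  exact h1

/-- distance between two index tuples -/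
def dst {n k : ℕ} (r c : Fin k → Fin n) : ℕ :=
  ∑ i, ((r i).val - (c i).val + ((c i).val - (r i).val))

lemma chain : ∀ (K : ℕ) (n : ℕ) (A : Matrix (Fin n) (Fin n) ℝ), TotallyNonneg A → 0 < A.det →
    Band A → ∀ (k : ℕ) (r c : Fin k → Fin n), StrictMono r → StrictMono c →
    dst r c ≤ K → 0 < ((A ^ (K+1)).submatrix r c).det := by
  intro K
  induction K with
  | zero =>
    intro n A hA hdet hb k r c hr hc hsum
    have h0 : dst r c = 0 := Nat.le_zero.mp hsum
    have hrc : r = c := by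
      funext i
      have h1 : (r i).val - (c i).val + ((c i).val - (r i).val) = 0 :=
        (Finset.sum_eq_zero_iff.mp h0) i (Finset.mem_univ i)
      ext
      omega
    rw [pow_one, hrc]
    exact prin_pos n A hA hdet k c hc
  | succ K IH =>
    intro n A hA hdet hb k r c hr hc hsum
    have hpow : A ^ (K + 1 + 1) = A * A ^ (K + 1) := by rw [pow_succ']
    rw [hpow]
    by_cases hrc : ∀ i, r i = c i
    · have hrceq : r = c := funext hrc
      have hge := cb_ge hA (tn_pow hA (Nat.succ_pos K)) hr hr hc
      have h1 : 0 < (A.submatrix r r).det := prin_pos n A hA hdet k r hr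
      have h2 : 0 < ((A ^ (K+1)).submatrix r c).det := by
        refine IH n A hA hdet hb k r c hr hc ?_
        rw [hrceq]
        simp [dst]
      exact lt_of_lt_of_le (mul_pos h1 h2) hge
    · push_neg at hrc
      obtain ⟨i₀, hi₀⟩ := hrc
      by_cases hup : ∃ j, r j < c j
      · -- largest j with r j < c j , move it up by one
        have hSne : (Finset.univ.filter (fun j => r j < c j)).Nonempty := by
          obtain ⟨j, hj⟩ := hup
          exact ⟨j, by simp [hj]⟩
        set j₀ := (Finset.univ.filter (fun j => r j < c j)).max' hSne with hj₀def
        have hj₀ : r j₀ < c j₀ := by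
          have := (Finset.univ.filter (fun j => r j < c j)).max'_mem hSne
          simpa using this
        have hmax : ∀ j, j₀ < j → c j ≤ r j := by
          intro j hj
          by_contra hlt
          push_neg at hlt
          have := Finset.le_max' (Finset.univ.filter (fun j => r j < c j)) j (by simpa using hlt)
          rw [← hj₀def] at this
          omega
        have hlt_n : (r j₀).val + 1 < n := by
          have h1 : (r j₀).val < (c j₀).val := hj₀
          have h2 := (c j₀).isLt
          omega
        set mfun : Fin k → Fin n := fun i => if i = j₀ then ⟨(r j₀).val + 1, hlt_n⟩ else r i
          with hmfun
        have hmono : StrictMono mfun := by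
          intro a b hab
          simp only [hmfun]
          rcases eq_or_ne a j₀ with rfl | ha <;> rcases eq_or_ne b j₀ with rfl | hbb
          · exact absurd hab (lt_irrefl _)
          · have h1 : (c b).val ≤ (r b).val := hmax b hab
            have h2 : (r j₀).val < (c j₀).val := hj₀
            have h6 : (c j₀).val < (c b).val := hc hab
            rw [if_pos rfl, if_neg hbb]
            rw [Fin.lt_def]
            show (r j₀).val + 1 < (r b).val
            omega
          · have h1 : (r a).val < (r j₀).val := hr hab
            rw [if_neg ha, if_pos rfl]
            rw [Fin.lt_def]
            show (r a).val < (r j₀).val + 1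
            omega
          · rw [if_neg ha, if_neg hbb]
            exact hr hab
        have hmup : 0 < (A.submatrix r mfun).det := by
          refine mup n A hA hdet hb k r mfun j₀ hr hmono ?_ ?_
          · intro i hi
            simp [hmfun, if_neg hi]
          · simp [hmfun]
        have hsum' : dst mfun c ≤ K := by
          have e1 : dst r c = ((r j₀).val - (c j₀).val + ((c j₀).val - (r j₀).val))
              + ∑ i ∈ Finset.univ.erase j₀,
                ((r i).val - (c i).val + ((c i).val - (r i).val)) := by
            unfold dst
            exact (Finset.add_sum_erase _ _ (Finset.mem_univ j₀)).symm
          have e2 : dst mfun c = ((mfun j₀).val - (c j₀).val + ((c j₀).val - (mfun j₀).val))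
              + ∑ i ∈ Finset.univ.erase j₀,
                ((mfun i).val - (c i).val + ((c i).val - (mfun i).val)) := by
            unfold dst
            exact (Finset.add_sum_erase _ _ (Finset.mem_univ j₀)).symm
          have he : ∑ i ∈ Finset.univ.erase j₀,
              ((mfun i).val - (c i).val + ((c i).val - (mfun i).val))
              = ∑ i ∈ Finset.univ.erase j₀,
              ((r i).val - (c i).val + ((c i).val - (r i).val)) := by
            refine Finset.sum_congr rfl fun i hi => ?_
            have hi' : i ≠ j₀ := (Finset.mem_erase.mp hi).1
            simp [hmfun, if_neg hi']
          have hm0 : (mfun j₀).val = (r j₀).val + 1 := by simp [hmfun]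
          have hj₀' : (r j₀).val < (c j₀).val := hj₀
          omega
        have hge := cb_ge hA (tn_pow hA (Nat.succ_pos K)) hr hmono hc
        have h2 := IH n A hA hdet hb k mfun c hmono hc hsum'
        exact lt_of_lt_of_le (mul_pos hmup h2) hge
      · -- no up moves: find smallest j with c j < r j and move down
        push_neg at hup
        have hSne : (Finset.univ.filter (fun j => c j < r j)).Nonempty := by
          refine ⟨i₀, ?_⟩
          have := hup i₀
          simp only [Finset.mem_filter, Finset.mem_univ, true_and]
          rcases lt_or_eq_of_le this with h | h
          · exact h
          · exact absurd h.symm hi₀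
        set j₀ := (Finset.univ.filter (fun j => c j < r j)).min' hSne with hj₀def
        have hj₀ : c j₀ < r j₀ := by
          have := (Finset.univ.filter (fun j => c j < r j)).min'_mem hSne
          simpa using this
        have hmin : ∀ j, j < j₀ → r j = c j := by
          intro j hj
          by_contra hne
          have h1 : c j < r j := lt_of_le_of_ne (hup j) (fun h => hne h.symm)
          have := Finset.min'_le (Finset.univ.filter (fun j => c j < r j)) j (by simpa using h1)
          rw [← hj₀def] at this
          omega
        have hpos : 0 < (r j₀).val := by
          have h1 : (c j₀).val < (r j₀).val := hj₀
          omega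
        have hlt_n : (r j₀).val - 1 < n := by
          have := (r j₀).isLt
          omega
        set mfun : Fin k → Fin n := fun i => if i = j₀ then ⟨(r j₀).val - 1, hlt_n⟩ else r i
          with hmfun
        have hmono : StrictMono mfun := by
          intro a b hab
          simp only [hmfun]
          rcases eq_or_ne a j₀ with rfl | ha <;> rcases eq_or_ne b j₀ with rfl | hbb
          · exact absurd hab (lt_irrefl _)
          · have h1 : (r j₀).val < (r b).val := hr hab
            rw [if_pos rfl, if_neg hbb]
            rw [Fin.lt_def]
            show (r j₀).val - 1 < (r b).val
            omega
          · have h1 : r a = c a := hmin a hab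
            have h3 : (c j₀).val < (r j₀).val := hj₀
            have h4 : (r a).val = (c a).val := by rw [h1]
            have h5 : (c a).val < (c j₀).val := hc hab
            rw [if_neg ha, if_pos rfl]
            rw [Fin.lt_def]
            show (r a).val < (r j₀).val - 1
            omega
          · rw [if_neg ha, if_neg hbb]
            exact hr hab
        have hmdown : 0 < (A.submatrix r mfun).det := by
          refine mdown n A hA hdet hb k r mfun j₀ hr hmono ?_ ?_
          · intro i hi
            simp [hmfun, if_neg hi]
          · simp only [hmfun, if_pos rfl]
            omega
        have hsum' : dst mfun c ≤ K := by
          have he : ∑ i ∈ Finset.univ.erase j₀,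
              ((mfun i).val - (c i).val + ((c i).val - (mfun i).val))
              = ∑ i ∈ Finset.univ.erase j₀,
              ((r i).val - (c i).val + ((c i).val - (r i).val)) := by
            refine Finset.sum_congr rfl fun i hi => ?_
            have hi' : i ≠ j₀ := (Finset.mem_erase.mp hi).1
            simp [hmfun, if_neg hi']
          have e1 : dst r c = ((r j₀).val - (c j₀).val + ((c j₀).val - (r j₀).val))
              + ∑ i ∈ Finset.univ.erase j₀,
                ((r i).val - (c i).val + ((c i).val - (r i).val)) := by
            unfold dst
            exact (Finset.add_sum_erase _ _ (Finset.mem_univ j₀)).symm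
          have e2 : dst mfun c = ((mfun j₀).val - (c j₀).val + ((c j₀).val - (mfun j₀).val))
              + ∑ i ∈ Finset.univ.erase j₀,
                ((mfun i).val - (c i).val + ((c i).val - (mfun i).val)) := by
            unfold dst
            exact (Finset.add_sum_erase _ _ (Finset.mem_univ j₀)).symm
          have hm0 : (mfun j₀).val = (r j₀).val - 1 := by simp [hmfun]
          have hj₀' : (c j₀).val < (r j₀).val := hj₀
          omega
        have hge := cb_ge hA (tn_pow hA (Nat.succ_pos K)) hr hmono hc
        have h2 := IH n A hA hdet hb k mfun c hmono hc hsum'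
        exact lt_of_lt_of_le (mul_pos hmdown h2) hge

lemma irred_transpose {n : ℕ} {A : Matrix (Fin n) (Fin n) ℝ} (h : MatIrreducible A) :
    MatIrreducible Aᵀ := by
  rintro ⟨σ, k, hk0, hkn, hzero⟩
  refine h ⟨(Fin.revPerm : Equiv.Perm (Fin n)).trans σ, n - k, by omega, by omega, ?_⟩
  intro a b ha hb
  have h1 := hzero b.rev a.rev ?_ ?_
  · simpa [Matrix.transpose_apply] using h1
  · have := b.isLt; simp only [Fin.val_rev]; omega
  · have := a.isLt; simp only [Fin.val_rev]; omega

lemma band_of_irred {n : ℕ} {A : Matrix (Fin n) (Fin n) ℝ} (hA : TotallyNonneg A)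
    (hdet : 0 < A.det) (hirr : MatIrreducible A) : Band A := by
  have main : ∀ (B : Matrix (Fin n) (Fin n) ℝ), TotallyNonneg B → 0 < B.det →
      MatIrreducible B → ∀ i j : Fin n, i.val + 1 = j.val → 0 < B i j := by
    intro B hB hBdet hBirr i j hij
    rcases lt_or_eq_of_le (tn1 hB i j) with h | h
    · exact h
    exfalso
    have hz : B i j = 0 := h.symm
    have hiltj : i < j := by rw [Fin.lt_def]; omega
    have step1 : ∀ q : Fin n, j ≤ q → B i q = 0 := by
      intro q hq
      rcases eq_or_lt_of_le hq with rfl | hq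
      · exact hz
      · have h2 := tn2 hB hiltj hq
        have hjj := diag_pos hB hBdet j
        have h3 := tn1 hB i q
        have h4 := tn1 hB j q
        nlinarith [h2, hjj, h3, h4, hz]
    have step2 : ∀ p q : Fin n, p ≤ i → j ≤ q → B p q = 0 := by
      intro p q hp hq
      rcases eq_or_lt_of_le hp with rfl | hp
      · exact step1 q hq
      · have hiq : B i q = 0 := step1 q hq
        have hltiq : i < q := lt_of_lt_of_le hiltj hq
        have h2 := tn2 hB hp hltiq
        have hii := diag_pos hB hBdet i
        have h3 := tn1 hB p q
        have h4 := tn1 hB p i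
        nlinarith [h2, hii, h3, h4, hiq]
    refine hBirr ⟨Fin.revPerm, n - j.val, ?_, ?_, ?_⟩
    · have := j.isLt; omega
    · have : 1 ≤ j.val := by omega
      have := j.isLt
      omega
    · intro a b ha hb
      refine step2 _ _ ?_ ?_
      · rw [Fin.le_def]
        have := a.isLt
        simp only [Fin.revPerm_apply, Fin.val_rev]
        omega
      · rw [Fin.le_def]
        have := b.isLt
        simp only [Fin.revPerm_apply, Fin.val_rev]
        omega
  intro i j hij
  rcases hij with h | h
  · exact main A hA hdet hirr i j h
  · have h1 := main Aᵀ (tn_transpose hA)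
      (by rw [Matrix.det_transpose]; exact hdet) (irred_transpose hirr) j i h
    simpa using h1

lemma osc_irred {n : ℕ} {A : Matrix (Fin n) (Fin n) ℝ} (hosc : Oscillatory A) :
    MatIrreducible A := by
  rintro ⟨σ, k, hk0, hkn, hzero⟩
  obtain ⟨hTN, m, hm, hTP⟩ := hosc
  have hblock : ∀ (t : ℕ), 1 ≤ t → ∀ a b : Fin n, k ≤ a.val → b.val < k →
      (A ^ t) (σ a) (σ b) = 0 := by
    intro t
    induction t with
    | zero => omega
    | succ t IH =>
      intro _ a b ha hb
      rcases Nat.eq_zero_or_pos t with rfl | ht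
      · rw [pow_one]; exact hzero a b ha hb
      · rw [pow_succ, Matrix.mul_apply]
        have hre := Fintype.sum_equiv σ
          (fun s => (A ^ t) (σ a) (σ s) * A (σ s) (σ b))
          (fun s => (A ^ t) (σ a) s * A s (σ b)) (fun s => rfl)
        rw [← hre]
        refine Finset.sum_eq_zero fun s _ => ?_
        by_cases hs : s.val < k
        · rw [IH ht a s ha hs, zero_mul]
        · rw [hzero s b (by omega) hb, mul_zero]
  have h1 := hTP 1 ![σ ⟨k, hkn⟩] ![σ ⟨0, lt_trans hk0 hkn⟩] strictMono_single strictMono_single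
  rw [Matrix.det_fin_one] at h1
  have h2 := hblock m hm ⟨k, hkn⟩ ⟨0, lt_trans hk0 hkn⟩ (le_refl k) hk0
  simp only [Matrix.submatrix_apply] at h1
  rw [show (![σ ⟨k, hkn⟩] : Fin 1 → Fin n) 0 = σ ⟨k, hkn⟩ from rfl,
    show (![σ ⟨0, lt_trans hk0 hkn⟩] : Fin 1 → Fin n) 0 = σ ⟨0, lt_trans hk0 hkn⟩ from rfl,
    h2] at h1
  exact lt_irrefl 0 h1

lemma osc_det {n : ℕ} {A : Matrix (Fin n) (Fin n) ℝ} (hosc : Oscillatory A) : A.det ≠ 0 := by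
  obtain ⟨hTN, m, hm, hTP⟩ := hosc
  have h1 := hTP n id id strictMono_id strictMono_id
  rw [Matrix.submatrix_id_id, Matrix.det_pow] at h1
  intro h0
  rw [h0, zero_pow (by omega : m ≠ 0)] at h1
  exact lt_irrefl 0 h1

end TN5aux

theorem stmt5 {n : ℕ} (A : Matrix (Fin n) (Fin n) ℝ) :
    Oscillatory A ↔ TotallyNonneg A ∧ A.det ≠ 0 ∧ MatIrreducible A := by
  constructor
  · intro hosc
    exact ⟨hosc.1, TN5aux.osc_det hosc, TN5aux.osc_irred hosc⟩
  · rintro ⟨hTN, hdet0, hirr⟩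
    have hdet : 0 < A.det := by
      have h1 := hTN n id id strictMono_id strictMono_id
      rw [Matrix.submatrix_id_id] at h1
      rcases lt_or_eq_of_le h1 with h | h
      · exact h
      · exact absurd h.symm hdet0
    have hb : TN5aux.Band A := TN5aux.band_of_irred hTN hdet hirr
    refine ⟨hTN, n*n+1, Nat.succ_pos _, ?_⟩
    intro k r c hr hc
    refine TN5aux.chain (n*n) n A hTN hdet hb k r c hr hc ?_
    have hbound : ∀ i, ((r i).val - (c i).val + ((c i).val - (r i).val)) ≤ n := by
      intro i
      have := (r i).isLt
      have := (c i).isLt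
      omega
    have hcard : k ≤ n := by
      have := Fintype.card_le_of_injective r hr.injective
      simpa using this
    calc TN5aux.dst r c ≤ ∑ _i : Fin k, n := Finset.sum_le_sum (fun i _ => hbound i)
      _ = k * n := by simp [Finset.sum_const, mul_comm]
      _ ≤ n * n := Nat.mul_le_mul_right n hcard
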